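/- Let h : ℝ^n → ℝ be differentiable and f : ℝ^n → ℝ be differentiable with L ≥ 0. If for all x, y ∈ ℝ^n we have f(y) ≤ f(x) + ⟨∇f(x), y − x⟩ + L·D_h(y,x), where D_h(y,x) = h(y) − h(x) − ⟨∇h(x), y − x⟩, then for all x, y ∈ ℝ^n, ⟨∇f(x) − ∇f(y), x − y⟩ ≤ L·⟨∇h(x) − ∇h(y), x − y⟩. -/
import Mathlib

open scoped RealInnerProductSpace

theorem stmt_1 {n : ℕ} (h f : EuclideanSpace ℝ (Fin n) → ℝ) (L : ℝ) (hL : 0 ≤ L)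
    (hh : Differentiable ℝ h) (hf : Differentiable ℝ f)
    (hdesc : ∀ x y : EuclideanSpace ℝ (Fin n),
      f y ≤ f x + ⟪gradient f x, y - x⟫ +
        L * (h y - h x - ⟪gradient h x, y - x⟫)) :
    ∀ x y : EuclideanSpace ℝ (Fin n),
      ⟪gradient f x - gradient f y, x - y⟫ ≤
        L * ⟪gradient h x - gradient h y, x - y⟫ := by
  intro x y
  have h1 := hdesc x y
  have h2 := hdesc y x
  have e : (y : EuclideanSpace ℝ (Fin n)) - x = -(x - y) := by abel
  rw [e, inner_neg_right, inner_neg_right] at h1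
  simp only [inner_sub_left]
  nlinarith [h1, h2]
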